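/- Let f : A → B be a homomorphism of abelian groups such that for every positive integer m the induced map A/mA → B/mB is surjective and B is finitely generated. Then f is surjective. -/

import Mathlib

/-- If `f : A → B` is a homomorphism of abelian groups such that for every positive
integer `m` the induced map `A/mA → B/mB` is surjective (i.e. every `b : B` is of the
form `f a + m • c`) and `B` is finitely generated, then `f` is surjective. -/
theorem stmt4 {A B : Type*} [AddCommGroup A] [AddCommGroup B]
    (hB : AddGroup.FG B) (f : A →+ B)
    (hsurj : ∀ m : ℕ, 0 < m → ∀ b : B, ∃ a : A, ∃ c : B, b = f a + m • c) :
    Function.Surjective f := by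
  -- work with the ℤ-linear map and its cokernel
  set g := f.toIntLinearMap with hg
  set R := LinearMap.range g with hR
  let Q := B ⧸ R
  let π : B →ₗ[ℤ] Q := R.mkQ
  -- Q is a finitely generated ℤ-module
  have hBfin : Module.Finite ℤ B := Module.Finite.iff_addGroup_fg.mpr hB
  have hQfin : Module.Finite ℤ Q := Module.Finite.quotient ℤ R
  have hQfg : (⊤ : Submodule ℤ Q).FG := hQfin.fg_top
  -- every element of Q is divisible by every positive m
  have hdiv : ∀ m : ℕ, 0 < m → ∀ q : Q, ∃ q' : Q, q = (m : ℤ) • q' := by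
    intro m hm q
    obtain ⟨b, rfl⟩ := R.mkQ_surjective q
    obtain ⟨a, c, hbc⟩ := hsurj m hm b
    refine ⟨π c, ?_⟩
    have : π b = π (f a) + π ((m : ℕ) • c) := by rw [← map_add, ← hbc]
    have hmem : f a ∈ R := ⟨a, rfl⟩
    have hfa : π (f a) = 0 := (Submodule.Quotient.mk_eq_zero R).mpr hmem
    rw [this, hfa, zero_add]
    simp only [π, map_nsmul, natCast_zsmul]
  -- Nakayama with the ideal (2)
  have hle : (⊤ : Submodule ℤ Q) ≤ (Ideal.span {(2 : ℤ)}) • ⊤ := by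
    intro q _
    obtain ⟨q', hq'⟩ := hdiv 2 (by norm_num) q
    rw [hq']
    exact Submodule.smul_mem_smul (Ideal.mem_span_singleton_self 2) trivial
  obtain ⟨r, hr1, hr0⟩ :=
    Submodule.exists_sub_one_mem_and_smul_eq_zero_of_fg_of_le_smul
      (Ideal.span {(2 : ℤ)}) ⊤ hQfg hle
  -- r = 1 + 2k is odd, hence nonzero
  obtain ⟨k, hk⟩ := Ideal.mem_span_singleton'.mp hr1
  have hrodd : r = 2 * k + 1 := by linarith [hk]
  have hrne : r ≠ 0 := by omega
  have hn : 0 < r.natAbs := Int.natAbs_pos.mpr hrne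
  -- conclude surjectivity using divisibility by |r|
  intro b
  obtain ⟨a, c, hbc⟩ := hsurj r.natAbs hn b
  have hc : (r.natAbs : ℤ) • (π c) = 0 := by
    rcases Int.natAbs_eq r with h | h
    · rw [← h]; exact hr0 _ trivial
    · have : (r.natAbs : ℤ) = -r := by omega
      rw [this, neg_smul, hr0 _ trivial, neg_zero]
  have : π b = 0 := by
    have : π b = π (f a) + (r.natAbs : ℤ) • π c := by
      rw [hbc, map_add, map_nsmul, natCast_zsmul]
    rw [this, hc, add_zero]
    have hmem : f a ∈ R := ⟨a, rfl⟩
    exact (Submodule.Quotient.mk_eq_zero R).mpr hmem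
  have hbR : b ∈ R := (Submodule.Quotient.mk_eq_zero R).mp this
  obtain ⟨a, ha⟩ := hbR
  exact ⟨a, ha⟩
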